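/- Let n ≥ 1 and let (a_1,…,a_{n+1}) be Lüroth digits with a_j ≥ 2 for all j and a_{n+1} ≥ 4. Then the open ball centered at any point x of the cylinder C_{n+1}(a_1,…,a_{n+1}) of radius |C_{n+1}(a_1,…,a_{n+1})| is contained in the union of the four cylinders C_{n+1}(a_1,…,a_n, a_{n+1}+j) for j ∈ {−1, 0, 1, 2}. -/

import Mathlib

/-- The Lüroth map L(x) = ⌊1/x⌋(⌊1/x⌋+1)x − ⌊1/x⌋, with L(0) = 0. -/
noncomputable def lurothL (x : ℝ) : ℝ :=
  if x = 0 then 0 else (⌊1 / x⌋ : ℝ) * ((⌊1 / x⌋ : ℝ) + 1) * x - (⌊1 / x⌋ : ℝ)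

/-- The n-th Lüroth digit (1-indexed): a_n(x) = ⌊1/L^{n−1}(x)⌋ + 1. -/
noncomputable def lurothDigit (n : ℕ) (x : ℝ) : ℕ :=
  (⌊1 / lurothL^[n - 1] x⌋).toNat + 1

/-- The cylinder of a word (b_1, …, b_k). -/
noncomputable def lurothCyl (b : ℕ → ℕ) (k : ℕ) : Set ℝ :=
  {x ∈ Set.Ioc (0 : ℝ) 1 | ∀ j ∈ Finset.Icc 1 k, lurothDigit j x = b j}

noncomputable def cylLeft : ℕ → (ℕ → ℕ) → ℝ
  | 0, _ => 0
  | (k+1), b => 1 / (b 1 : ℝ) + cylLeft k (fun j => b (j+1)) / ((b 1 : ℝ) * ((b 1 : ℝ) - 1))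

lemma digit_shift (i : ℕ) (x : ℝ) :
    lurothDigit (i + 2) x = lurothDigit (i + 1) (lurothL x) := by
  simp [lurothDigit, Function.iterate_succ_apply]

lemma digit_one_eq_iff {x : ℝ} (hx : x ∈ Set.Ioc (0:ℝ) 1) {m : ℕ} (hm : 2 ≤ m) :
    lurothDigit 1 x = m ↔ x ∈ Set.Ioc (1/(m:ℝ)) (1/((m:ℝ)-1)) := by
  obtain ⟨hx0, hx1⟩ := hx
  have hmR : (2:ℝ) ≤ (m:ℝ) := by exact_mod_cast hm
  have hm0 : (0:ℝ) < (m:ℝ) := by linarith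
  have hm1 : (0:ℝ) < (m:ℝ) - 1 := by linarith
  have h1x : (1:ℝ) ≤ 1 / x := one_le_one_div hx0 hx1
  have hf : (1:ℤ) ≤ ⌊1/x⌋ := Int.le_floor.2 (by exact_mod_cast h1x)
  have hd : lurothDigit 1 x = (⌊1/x⌋).toNat + 1 := by simp [lurothDigit]
  rw [hd]
  constructor
  · intro h
    have hfl : ⌊1/x⌋ = (m:ℤ) - 1 := by omega
    have hb := Int.floor_eq_iff.mp hfl
    obtain ⟨hb1, hb2⟩ := hb
    push_cast at hb1 hb2
    have hmx : 1 < (m:ℝ) * x := by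
      have := (div_lt_iff₀ hx0).1 (by linarith : 1/x < (m:ℝ))
      linarith
    have hmx2 : ((m:ℝ) - 1) * x ≤ 1 := by
      have := (le_div_iff₀ hx0).1 hb1
      linarith
    constructor
    · rw [div_lt_iff₀ hm0]; nlinarith
    · rw [le_div_iff₀ hm1]; nlinarith
  · rintro ⟨h1, h2⟩
    have hmx : 1 < (m:ℝ) * x := by
      have := (div_lt_iff₀ hm0).1 h1; nlinarith
    have hmx2 : ((m:ℝ) - 1) * x ≤ 1 := by
      have := (le_div_iff₀ hm1).1 h2; nlinarith
    have hfl : ⌊1/x⌋ = (m:ℤ) - 1 := by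
      rw [Int.floor_eq_iff]
      constructor
      · push_cast
        rw [le_div_iff₀ hx0]; nlinarith
      · push_cast
        rw [div_lt_iff₀ hx0]; nlinarith
    omega

lemma lurothL_eq {x : ℝ} {m : ℕ} (hm : 2 ≤ m)
    (hx : x ∈ Set.Ioc (1/(m:ℝ)) (1/((m:ℝ)-1))) :
    lurothL x = ((m:ℝ)-1) * (m:ℝ) * x - ((m:ℝ)-1) := by
  obtain ⟨h1, h2⟩ := hx
  have hmR : (2:ℝ) ≤ (m:ℝ) := by exact_mod_cast hm
  have hm0 : (0:ℝ) < (m:ℝ) := by linarith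
  have hm1 : (0:ℝ) < (m:ℝ) - 1 := by linarith
  have hx0 : 0 < x := lt_trans (by positivity) h1
  have hfl : ⌊1/x⌋ = (m:ℤ) - 1 := by
    rw [Int.floor_eq_iff]
    have hmx : 1 < (m:ℝ) * x := by
      have := (div_lt_iff₀ hm0).1 h1; nlinarith
    have hmx2 : ((m:ℝ) - 1) * x ≤ 1 := by
      have := (le_div_iff₀ hm1).1 h2; nlinarith
    constructor
    · push_cast; rw [le_div_iff₀ hx0]; nlinarith
    · push_cast; rw [div_lt_iff₀ hx0]; nlinarith
  rw [lurothL, if_neg (ne_of_gt hx0), hfl]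
  push_cast
  ring

lemma cyl_succ (k : ℕ) (b : ℕ → ℕ) (hm : 2 ≤ b 1) :
    lurothCyl b (k+1) =
      {x ∈ Set.Ioc (1/(b 1:ℝ)) (1/((b 1:ℝ)-1)) |
        lurothL x ∈ lurothCyl (fun j => b (j+1)) k} := by
  have hmR : (2:ℝ) ≤ (b 1:ℝ) := by exact_mod_cast hm
  ext x
  simp only [lurothCyl, Set.mem_setOf_eq, Set.mem_sep_iff]
  constructor
  · rintro ⟨hx01, hd⟩
    have h1 : lurothDigit 1 x = b 1 := hd 1 (by simp)
    have hxI : x ∈ Set.Ioc (1/(b 1:ℝ)) (1/((b 1:ℝ)-1)) :=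
      (digit_one_eq_iff hx01 hm).1 h1
    have hL := lurothL_eq hm hxI
    obtain ⟨hxa, hxb⟩ := hxI
    refine ⟨⟨hxa, hxb⟩, ⟨?_, ?_⟩⟩
    · rw [hL]
      have hc : (0:ℝ) < ((b 1:ℝ)-1) * (b 1:ℝ) := by nlinarith
      have e1 : ((b 1:ℝ)-1) * (b 1:ℝ) * (1/(b 1:ℝ)) = (b 1:ℝ) - 1 := by
        field_simp
      have e2 : ((b 1:ℝ)-1) * (b 1:ℝ) * (1/((b 1:ℝ)-1)) = (b 1:ℝ) := by
        have : ((b 1:ℝ)-1) ≠ 0 := by linarith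
        field_simp
      have h1' := mul_lt_mul_of_pos_left hxa hc
      have h2' := (mul_le_mul_iff_right₀ hc).2 hxb
      constructor
      · linarith
      · linarith
    · intro i hi
      simp only [Finset.mem_Icc] at hi
      obtain ⟨hi1, hi2⟩ := hi
      obtain ⟨i, rfl⟩ := Nat.exists_eq_add_of_le hi1
      have := hd (i + 2) (by simp; omega)
      rw [digit_shift] at this
      rw [show 1 + i = i + 1 by omega]
      exact this
  · rintro ⟨hxI, hL01, hLd⟩
    have hx01 : x ∈ Set.Ioc (0:ℝ) 1 := by
      obtain ⟨hxa, hxb⟩ := hxI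
      constructor
      · have : (0:ℝ) < 1/(b 1:ℝ) := by positivity
        linarith
      · have : 1/((b 1:ℝ)-1) ≤ 1 := by
          rw [div_le_one (by linarith)]; linarith
        linarith
    refine ⟨hx01, ?_⟩
    intro j hj
    simp only [Finset.mem_Icc] at hj
    obtain ⟨hj1, hj2⟩ := hj
    match j, hj1, hj2 with
    | 1, _, _ => exact (digit_one_eq_iff hx01 hm).2 hxI
    | (i+2), _, h2 =>
      rw [digit_shift]
      exact hLd (i+1) (by simp; omega)

lemma Ioc_unit {p q : ℝ} (h : Set.Ioc p q ⊆ Set.Ioc 0 1) (hpq : p < q) :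
    0 ≤ p ∧ q ≤ 1 := by
  have hq := h ⟨hpq, le_refl q⟩
  refine ⟨?_, hq.2⟩
  by_contra hp
  push_neg at hp
  have ht : min q (p/2) ∈ Set.Ioc p q :=
    ⟨lt_min hpq (by linarith), min_le_left _ _⟩
  have h1 := (h ht).1
  have h2 : min q (p/2) ≤ p/2 := min_le_right _ _
  linarith

lemma prod_Icc_shift (k : ℕ) (g : ℕ → ℝ) :
    ∏ j ∈ Finset.Icc 1 (k+1), g j = g 1 * ∏ j ∈ Finset.Icc 1 k, g (j+1) := by
  induction k with
  | zero => simp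
  | succ k ih =>
    rw [Finset.prod_Icc_succ_top (by omega : 1 ≤ k + 1 + 1), ih,
      Finset.prod_Icc_succ_top (by omega : 1 ≤ k + 1), mul_assoc]

lemma luroth_prod_pos {k : ℕ} {b : ℕ → ℕ} (hb : ∀ j ∈ Finset.Icc 1 k, 2 ≤ b j) :
    0 < ∏ j ∈ Finset.Icc 1 k, 1/((b j:ℝ)*((b j:ℝ)-1)) :=
  Finset.prod_pos (fun j hj => by
    have h2 : (2:ℝ) ≤ (b j:ℝ) := by exact_mod_cast hb j hj
    have h0 : (0:ℝ) < (b j:ℝ)*((b j:ℝ)-1) := by nlinarith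
    positivity)

lemma cyl_eq : ∀ (k : ℕ) (b : ℕ → ℕ), (∀ j ∈ Finset.Icc 1 k, 2 ≤ b j) →
    lurothCyl b k = Set.Ioc (cylLeft k b)
      (cylLeft k b + ∏ j ∈ Finset.Icc 1 k, 1/((b j:ℝ)*((b j:ℝ)-1))) := by
  intro k
  induction k with
  | zero =>
    intro b _
    simp only [lurothCyl, cylLeft, Finset.Icc_self, Finset.Icc_eq_empty_of_lt
      (by omega : (0:ℕ) < 1)]
    simp [Set.Ioc]
  | succ k ih =>
    intro b hb
    have hm : 2 ≤ b 1 := hb 1 (by simp)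
    have hmR : (2:ℝ) ≤ (b 1 : ℝ) := by exact_mod_cast hm
    have hm1 : (0:ℝ) < (b 1:ℝ) - 1 := by linarith
    have hb' : ∀ j ∈ Finset.Icc 1 k, 2 ≤ b (j+1) := by
      intro j hj; simp only [Finset.mem_Icc] at hj
      exact hb (j+1) (by simp; omega)
    have hih := ih (fun j => b (j+1)) hb'
    have hΛpos : 0 < ∏ j ∈ Finset.Icc 1 k, 1/((b (j+1):ℝ)*((b (j+1):ℝ)-1)) :=
      luroth_prod_pos hb'
    set m : ℝ := (b 1 : ℝ) with hmdef
    set e' := cylLeft k (fun j => b (j+1)) with he'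
    set Λ' := ∏ j ∈ Finset.Icc 1 k, 1/((b (j+1):ℝ)*((b (j+1):ℝ)-1)) with hΛ'
    have hsub : Set.Ioc e' (e' + Λ') ⊆ Set.Ioc 0 1 := by
      rw [← hih]; intro y hy; exact hy.1
    obtain ⟨he0, he1⟩ := Ioc_unit hsub (by linarith)
    have hc : (0:ℝ) < m * (m - 1) := by nlinarith
    have hEdef : cylLeft (k+1) b = 1/m + e'/(m*(m-1)) := rfl
    have hprod : ∏ j ∈ Finset.Icc 1 (k+1), 1/((b j:ℝ)*((b j:ℝ)-1))
        = 1/(m*(m-1)) * Λ' := by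
      rw [prod_Icc_shift]
    rw [cyl_succ k b hm, hih, hEdef, hprod]
    have key : (1/m + e'/(m*(m-1))) * (m*(m-1)) = (m-1) + e' := by
      field_simp
    have key2 : (1/m + e'/(m*(m-1)) + 1/(m*(m-1))*Λ') * (m*(m-1))
        = (m-1) + e' + Λ' := by
      field_simp
    ext x
    simp only [Set.mem_sep_iff, Set.mem_Ioc]
    constructor
    · rintro ⟨⟨hxa, hxb⟩, hL1, hL2⟩
      rw [lurothL_eq hm ⟨hxa, hxb⟩] at hL1 hL2
      constructor
      · have h' : (1/m + e'/(m*(m-1))) * (m*(m-1)) < x * (m*(m-1)) := by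
          rw [key]; nlinarith
        exact (mul_lt_mul_iff_left₀ hc).1 h'
      · have h' : x * (m*(m-1)) ≤ (1/m + e'/(m*(m-1)) + 1/(m*(m-1))*Λ') * (m*(m-1)) := by
          rw [key2]; nlinarith
        exact (mul_le_mul_iff_left₀ hc).1 h'
    · rintro ⟨hE1, hE2⟩
      have hd0 : 0 ≤ e'/(m*(m-1)) := by positivity
      have hxa : 1/m < x := by
        have : (0:ℝ) < 1/m := by positivity
        linarith
      have hxb : x ≤ 1/(m-1) := by
        have h' := (mul_le_mul_iff_left₀ hc).2 hE2
        rw [key2] at h'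
        rw [le_div_iff₀ hm1]
        nlinarith
      refine ⟨⟨hxa, hxb⟩, ?_⟩
      rw [lurothL_eq hm ⟨hxa, hxb⟩]
      constructor
      · have h' := (mul_lt_mul_iff_left₀ hc).2 hE1
        rw [key] at h'
        nlinarith
      · have h' := (mul_le_mul_iff_left₀ hc).2 hE2
        rw [key2] at h'
        nlinarith

lemma cylLeft_adj : ∀ (k : ℕ) (b c : ℕ → ℕ),
    (∀ j ∈ Finset.Icc 1 k, b j = c j) → 2 ≤ c (k+1) → b (k+1) = c (k+1) + 1 →
    cylLeft (k+1) b + ∏ j ∈ Finset.Icc 1 (k+1), 1/((b j:ℝ)*((b j:ℝ)-1))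
      = cylLeft (k+1) c := by
  intro k
  induction k with
  | zero =>
    intro b c _ hc2 hbc
    have hv : (2:ℝ) ≤ (c 1:ℝ) := by exact_mod_cast hc2
    have hb1 : (b 1 : ℝ) = (c 1 : ℝ) + 1 := by exact_mod_cast hbc
    have e1 : cylLeft 1 b = 1/(b 1:ℝ) := by
      show 1/(b 1:ℝ) + cylLeft 0 _ / _ = _
      simp [cylLeft]
    have e2 : cylLeft 1 c = 1/(c 1:ℝ) := by
      show 1/(c 1:ℝ) + cylLeft 0 _ / _ = _
      simp [cylLeft]
    rw [e1, e2, Finset.Icc_self, Finset.prod_singleton, hb1]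
    have h1 : (c 1:ℝ) ≠ 0 := by linarith
    have h2 : (c 1:ℝ) + 1 ≠ 0 := by linarith
    field_simp
    rw [add_sub_cancel_right, mul_add, mul_one_div_cancel h1, mul_one]
  | succ k ih =>
    intro b c hagree hc2 hbc
    have h1 : b 1 = c 1 := hagree 1 (by simp)
    have h1R : (b 1 : ℝ) = (c 1 : ℝ) := by exact_mod_cast h1
    have ihr := ih (fun j => b (j+1)) (fun j => c (j+1))
      (fun j hj => by
        simp only [Finset.mem_Icc] at hj
        exact hagree (j+1) (by simp; omega))
      hc2 hbc
    have eb : cylLeft (k+2) b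
        = 1/(b 1:ℝ) + cylLeft (k+1) (fun j => b (j+1)) / ((b 1:ℝ)*((b 1:ℝ)-1)) := rfl
    have ec : cylLeft (k+2) c
        = 1/(c 1:ℝ) + cylLeft (k+1) (fun j => c (j+1)) / ((c 1:ℝ)*((c 1:ℝ)-1)) := rfl
    rw [eb, ec, prod_Icc_shift, h1R, ← ihr]
    ring

set_option maxHeartbeats 1000000 in
/-- For n ≥ 1, Lüroth digits a_j ≥ 2 with a_{n+1} ≥ 4, and any
x ∈ C_{n+1}(a_1,…,a_{n+1}), the open ball at x of radius
|C_{n+1}(a_1,…,a_{n+1})| is contained in the union of the four cylinders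
C_{n+1}(a_1,…,a_n,a_{n+1}+j), j ∈ {−1,0,1,2}. -/
theorem luroth_ball_subset_four_cylinders (n : ℕ) (hn : 1 ≤ n) (a : ℕ → ℕ)
    (ha : ∀ j ∈ Finset.Icc 1 (n + 1), 2 ≤ a j) (ha4 : 4 ≤ a (n + 1))
    (x : ℝ) (hx : x ∈ lurothCyl a (n + 1)) :
    Metric.ball x (∏ j ∈ Finset.Icc 1 (n + 1), 1 / ((a j : ℝ) * ((a j : ℝ) - 1)))
      ⊆ ⋃ b ∈ Set.Icc (a (n + 1) - 1) (a (n + 1) + 2),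
          lurothCyl (Function.update a (n + 1) b) (n + 1) := by
  classical
  obtain ⟨p, hp⟩ : ∃ p, a (n + 1) = p + 1 := ⟨a (n + 1) - 1, by omega⟩
  have hp3 : 3 ≤ p := by omega
  -- digit bounds for updated words
  have hdig : ∀ v, 2 ≤ v → ∀ j ∈ Finset.Icc 1 (n + 1),
      2 ≤ Function.update a (n + 1) v j := by
    intro v hv j hj
    rcases eq_or_ne j (n + 1) with h | h
    · rw [h, Function.update_self]; exact hv
    · rw [Function.update_of_ne h]; exact ha j hj
  have hagree : ∀ v w, ∀ j ∈ Finset.Icc 1 n,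
      Function.update a (n + 1) v j = Function.update a (n + 1) w j := by
    intro v w j hj
    simp only [Finset.mem_Icc] at hj
    have h : j ≠ n + 1 := by omega
    rw [Function.update_of_ne h, Function.update_of_ne h]
  -- cylinders as intervals
  have hcyl : ∀ v, 2 ≤ v → lurothCyl (Function.update a (n + 1) v) (n + 1)
      = Set.Ioc (cylLeft (n + 1) (Function.update a (n + 1) v))
          (cylLeft (n + 1) (Function.update a (n + 1) v)
            + ∏ j ∈ Finset.Icc 1 (n + 1),
                1 / ((Function.update a (n + 1) v j : ℝ)
                  * ((Function.update a (n + 1) v j : ℝ) - 1))) :=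
    fun v hv => cyl_eq (n + 1) _ (hdig v hv)
  -- adjacency
  have hadj : ∀ v, 2 ≤ v →
      cylLeft (n + 1) (Function.update a (n + 1) (v + 1))
        + ∏ j ∈ Finset.Icc 1 (n + 1),
            1 / ((Function.update a (n + 1) (v + 1) j : ℝ)
              * ((Function.update a (n + 1) (v + 1) j : ℝ) - 1))
      = cylLeft (n + 1) (Function.update a (n + 1) v) := by
    intro v hv
    apply cylLeft_adj n
    · intro j hj; exact hagree _ _ j hj
    · rw [Function.update_self]; exact hv
    · rw [Function.update_self, Function.update_self]
  -- product formula
  have hP : ∀ v : ℕ, ∏ j ∈ Finset.Icc 1 (n + 1),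
        1 / ((Function.update a (n + 1) v j : ℝ)
          * ((Function.update a (n + 1) v j : ℝ) - 1))
      = (∏ j ∈ Finset.Icc 1 n, 1 / ((a j : ℝ) * ((a j : ℝ) - 1)))
        * (1 / ((v : ℝ) * ((v : ℝ) - 1))) := by
    intro v
    rw [Finset.prod_Icc_succ_top (by omega : 1 ≤ n + 1), Function.update_self]
    congr 1
    apply Finset.prod_congr rfl
    intro j hj
    simp only [Finset.mem_Icc] at hj
    rw [Function.update_of_ne (by omega : j ≠ n + 1)]
  set P : ℝ := ∏ j ∈ Finset.Icc 1 n, 1 / ((a j : ℝ) * ((a j : ℝ) - 1)) with hPdef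
  have hPpos : 0 < P := luroth_prod_pos (fun j hj => ha j (by
    simp only [Finset.mem_Icc] at hj ⊢; omega))
  -- abbreviations
  have hq : (3:ℝ) ≤ (p:ℝ) := by exact_mod_cast hp3
  have A1 := hadj p (by omega)
  have A2 := hadj (p + 1) (by omega)
  have A3 := hadj (p + 2) (by omega)
  simp only [show p + 1 + 1 = p + 2 from rfl, show p + 2 + 1 = p + 3 from rfl]
    at A2 A3
  rw [hP (p + 1)] at A1
  rw [hP (p + 2)] at A2
  rw [hP (p + 3)] at A3
  push_cast at A1 A2 A3
  -- the point x
  have hua : Function.update a (n + 1) (p + 1) = a := by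
    rw [← hp]; exact Function.update_eq_self _ _
  have hx1 : x ∈ Set.Ioc (cylLeft (n + 1) (Function.update a (n + 1) (p + 1))) (cylLeft (n + 1) (Function.update a (n + 1) (p + 1)) + P * (1 / (((p:ℝ) + 1) * (((p:ℝ) + 1) - 1)))) := by
    have h := hcyl (p + 1) (by omega)
    rw [hP (p + 1)] at h
    push_cast at h
    rw [← h, hua]
    exact hx
  obtain ⟨hxl, hxr⟩ := hx1
  -- radius
  have hr : ∏ j ∈ Finset.Icc 1 (n + 1), 1 / ((a j : ℝ) * ((a j : ℝ) - 1))
      = P * (1 / (((p:ℝ) + 1) * (((p:ℝ) + 1) - 1))) := by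
    conv_lhs => rw [← hua]
    rw [hP (p + 1)]
    push_cast
    rfl
  -- length inequalities
  have hL1 : (0:ℝ) < P * (1 / (((p:ℝ) + 1) * (((p:ℝ) + 1) - 1))) := by
    have : (0:ℝ) < ((p:ℝ) + 1) * (((p:ℝ) + 1) - 1) := by nlinarith
    positivity
  have I1 : P * (1 / (((p:ℝ) + 1) * (((p:ℝ) + 1) - 1)))
      ≤ P * (1 / ((p:ℝ) * ((p:ℝ) - 1))) := by
    apply mul_le_mul_of_nonneg_left _ (le_of_lt hPpos)
    apply one_div_le_one_div_of_le
    · nlinarith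
    · nlinarith
  have I2 : P * (1 / (((p:ℝ) + 1) * (((p:ℝ) + 1) - 1)))
      ≤ P * (1 / (((p:ℝ) + 2) * (((p:ℝ) + 2) - 1)))
        + P * (1 / (((p:ℝ) + 3) * (((p:ℝ) + 3) - 1))) := by
    rw [← mul_add]
    apply mul_le_mul_of_nonneg_left _ (le_of_lt hPpos)
    have h1 : (0:ℝ) < ((p:ℝ) + 1) * (((p:ℝ) + 1) - 1) := by nlinarith
    have h2 : (0:ℝ) < ((p:ℝ) + 2) * (((p:ℝ) + 2) - 1) := by nlinarith
    have h3 : (0:ℝ) < ((p:ℝ) + 3) * (((p:ℝ) + 3) - 1) := by nlinarith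
    rw [div_add_div _ _ (ne_of_gt h2) (ne_of_gt h3),
      div_le_div_iff₀ h1 (by positivity)]
    have key : (0:ℝ) ≤ ((p:ℝ)+2)^2 * (((p:ℝ)+1) * ((p:ℝ)-3)) :=
      mul_nonneg (sq_nonneg _) (mul_nonneg (by linarith) (by linarith))
    nlinarith [key]
  -- the ball
  intro y hy
  rw [Real.ball_eq_Ioo, hr] at hy
  obtain ⟨hy1, hy2⟩ := hy
  simp only [Set.mem_iUnion, exists_prop]
  rcases le_or_gt y (cylLeft (n + 1) (Function.update a (n + 1) (p + 2))) with hc1 | hc1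
  · -- y in cylinder with digit p+3
    refine ⟨p + 3, ⟨by omega, by omega⟩, ?_⟩
    have h := hcyl (p + 3) (by omega)
    rw [hP (p + 3)] at h
    push_cast at h
    rw [h]
    constructor
    · linarith
    · linarith
  · rcases le_or_gt y (cylLeft (n + 1) (Function.update a (n + 1) (p + 1))) with hc2 | hc2
    · refine ⟨p + 2, ⟨by omega, by omega⟩, ?_⟩
      have h := hcyl (p + 2) (by omega)
      rw [hP (p + 2)] at h
      push_cast at h
      rw [h]
      constructor
      · linarith
      · linarith
    · rcases le_or_gt y (cylLeft (n + 1) (Function.update a (n + 1) (p + 1)) + P * (1 / (((p:ℝ) + 1) * (((p:ℝ) + 1) - 1)))) with hc3 | hc3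
      · refine ⟨p + 1, ⟨by omega, by omega⟩, ?_⟩
        have h := hcyl (p + 1) (by omega)
        rw [hP (p + 1)] at h
        push_cast at h
        rw [h]
        exact ⟨hc2, hc3⟩
      · refine ⟨p, ⟨by omega, by omega⟩, ?_⟩
        have h := hcyl p (by omega)
        rw [hP p] at h
        push_cast at h
        rw [h]
        constructor
        · linarith
        · linarith
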